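/- Let H^w be a max-norm contraction with factor γ₁ ∈ [0,1) and fixed point Q*, and suppose ‖Q* − Q_0‖ ≤ 2V_max and Q_n = (1/n)(H^w Q_0 + (n−1)H^w Q_{n−1} − M_{n−1}) for all n ≥ 1, where M_n = Σ_{k=0}^n m_k. Then for all n ≥ 1, ‖Q* − Q_n‖ ≤ 2γ₁β₁V_max/n + (1/n) Σ_{k=1}^n γ₁^{n−k}‖M_{k−1}‖, where β₁ = 1/(1−γ₁). -/

import Mathlib

/-- Lemma 3: error propagation bound for the GSQL iterates. -/
theorem stmt_11 {S A : Type*} [Fintype S] [Fintype A] [Nonempty S] [Nonempty A]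
    (Hw : (S × A → ℝ) → (S × A → ℝ)) (γ₁ Vmax : ℝ)
    (hγ₁0 : 0 ≤ γ₁) (hγ₁1 : γ₁ < 1) (hV : 0 < Vmax)
    (hcontr : ∀ X Y : S × A → ℝ, ‖Hw X - Hw Y‖ ≤ γ₁ * ‖X - Y‖)
    (Qs : S × A → ℝ) (hfix : Hw Qs = Qs)
    (Q : ℕ → (S × A → ℝ)) (m : ℕ → (S × A → ℝ)) (M : ℕ → (S × A → ℝ))
    (hM : ∀ n : ℕ, M n = ∑ k ∈ Finset.range (n + 1), m k)
    (h0 : ‖Qs - Q 0‖ ≤ 2 * Vmax)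
    (hQ0 : ‖Q 0‖ ≤ Vmax) (hQs : ‖Qs‖ ≤ Vmax)
    (hform : ∀ n : ℕ, 1 ≤ n →
      Q n = (1 / (n : ℝ)) • (Hw (Q 0) + ((n : ℝ) - 1) • Hw (Q (n - 1)) - M (n - 1))) :
    ∀ n : ℕ, 1 ≤ n →
      ‖Qs - Q n‖ ≤ 2 * γ₁ * (1 / (1 - γ₁)) * Vmax / n +
        (1 / (n : ℝ)) * ∑ k ∈ Finset.Icc 1 n, γ₁ ^ (n - k) * ‖M (k - 1)‖ := by
  have h1γ : (0:ℝ) < 1 - γ₁ := by linarith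
  have hβ : 1 ≤ 1 / (1 - γ₁) := by
    rw [le_div_iff₀ h1γ]; linarith
  have key : ∀ n : ℕ, 1 ≤ n → (n : ℝ) * ‖Qs - Q n‖ ≤
      2 * γ₁ * (1 / (1 - γ₁)) * Vmax +
        ∑ k ∈ Finset.Icc 1 n, γ₁ ^ (n - k) * ‖M (k - 1)‖ := by
    intro n hn
    induction n, hn using Nat.le_induction with
    | base =>
      have h1 := hform 1 le_rfl
      simp only [Nat.cast_one, one_div, inv_one, one_smul, sub_self, zero_smul,
        add_zero, Nat.sub_self] at h1
      have e1 : Qs - Q 1 = (Hw Qs - Hw (Q 0)) + M 0 := by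
        rw [h1, hfix]; abel
      have hc := hcontr Qs (Q 0)
      have hn1 : ‖Qs - Q 1‖ ≤ γ₁ * (2 * Vmax) + ‖M 0‖ := by
        rw [e1]
        calc ‖(Hw Qs - Hw (Q 0)) + M 0‖ ≤ ‖Hw Qs - Hw (Q 0)‖ + ‖M 0‖ := norm_add_le _ _
          _ ≤ γ₁ * (2 * Vmax) + ‖M 0‖ := by
              have : γ₁ * ‖Qs - Q 0‖ ≤ γ₁ * (2 * Vmax) := by
                apply mul_le_mul_of_nonneg_left h0 hγ₁0
              linarith
      have hsum : ∑ k ∈ Finset.Icc 1 1, γ₁ ^ (1 - k) * ‖M (k - 1)‖ = ‖M 0‖ := by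
        simp
      rw [hsum, Nat.cast_one, one_mul]
      have : γ₁ * (2 * Vmax) ≤ 2 * γ₁ * (1 / (1 - γ₁)) * Vmax := by
        nlinarith [mul_nonneg hγ₁0 hV.le]
      linarith
    | succ n hn ih =>
      have hnp : (0:ℝ) < (n:ℝ) + 1 := by positivity
      have hform' := hform (n + 1) (by omega)
      simp only [Nat.add_sub_cancel, Nat.cast_add, Nat.cast_one, add_sub_cancel_right] at hform'
      set X : S × A → ℝ := (Hw Qs - Hw (Q 0)) + (n : ℝ) • (Hw Qs - Hw (Q n)) + M n with hX
      have hQsx : Qs = (1 / ((n:ℝ) + 1)) • (((n:ℝ) + 1) • Hw Qs) := by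
        rw [smul_smul, one_div, inv_mul_cancel₀ hnp.ne', one_smul, hfix]
      have hdiff : Qs - Q (n + 1) = (1 / ((n:ℝ) + 1)) • X := by
        rw [hform']
        nth_rewrite 1 [hQsx]
        rw [← smul_sub]
        congr 1
        rw [hX]
        module
      have hnormX : ((n:ℝ) + 1) * ‖Qs - Q (n + 1)‖ = ‖X‖ := by
        rw [hdiff, norm_smul, Real.norm_eq_abs, abs_of_pos (by positivity : (0:ℝ) < 1 / ((n:ℝ)+1))]
        field_simp
      have hc0 := hcontr Qs (Q 0)
      have hcn := hcontr Qs (Q n)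
      have hXle : ‖X‖ ≤ γ₁ * (2 * Vmax) +
          γ₁ * ((n:ℝ) * ‖Qs - Q n‖) + ‖M n‖ := by
        calc ‖X‖ ≤ ‖(Hw Qs - Hw (Q 0)) + (n : ℝ) • (Hw Qs - Hw (Q n))‖ + ‖M n‖ :=
              norm_add_le _ _
          _ ≤ ‖Hw Qs - Hw (Q 0)‖ + ‖(n : ℝ) • (Hw Qs - Hw (Q n))‖ + ‖M n‖ := by
              have := norm_add_le (Hw Qs - Hw (Q 0)) ((n : ℝ) • (Hw Qs - Hw (Q n)))
              linarith
          _ ≤ γ₁ * (2 * Vmax) + γ₁ * ((n:ℝ) * ‖Qs - Q n‖) + ‖M n‖ := by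
              rw [norm_smul, Real.norm_eq_abs, abs_of_nonneg (by positivity : (0:ℝ) ≤ (n:ℝ))]
              have h1 : γ₁ * ‖Qs - Q 0‖ ≤ γ₁ * (2 * Vmax) :=
                mul_le_mul_of_nonneg_left h0 hγ₁0
              have h2 : (n:ℝ) * ‖Hw Qs - Hw (Q n)‖ ≤ (n:ℝ) * (γ₁ * ‖Qs - Q n‖) :=
                mul_le_mul_of_nonneg_left hcn (by positivity)
              have h3 : (n:ℝ) * (γ₁ * ‖Qs - Q n‖) = γ₁ * ((n:ℝ) * ‖Qs - Q n‖) := by ring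
              linarith
      have hsum : ∑ k ∈ Finset.Icc 1 (n+1), γ₁ ^ (n + 1 - k) * ‖M (k - 1)‖
          = γ₁ * ∑ k ∈ Finset.Icc 1 n, γ₁ ^ (n - k) * ‖M (k - 1)‖ + ‖M n‖ := by
        rw [Finset.sum_Icc_succ_top (by omega : 1 ≤ n + 1), Finset.mul_sum]
        simp only [Nat.sub_self, pow_zero, one_mul, Nat.add_sub_cancel]
        congr 1
        apply Finset.sum_congr rfl
        intro k hk
        rw [Finset.mem_Icc] at hk
        rw [show n + 1 - k = (n - k) + 1 from by omega, pow_succ]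
        ring
      have hih : γ₁ * ((n:ℝ) * ‖Qs - Q n‖) ≤
          γ₁ * (2 * γ₁ * (1 / (1 - γ₁)) * Vmax +
            ∑ k ∈ Finset.Icc 1 n, γ₁ ^ (n - k) * ‖M (k - 1)‖) :=
        mul_le_mul_of_nonneg_left ih hγ₁0
      have halg : γ₁ * (2 * Vmax) + γ₁ * (2 * γ₁ * (1 / (1 - γ₁)) * Vmax)
          = 2 * γ₁ * (1 / (1 - γ₁)) * Vmax := by
        field_simp
        ring
      push_cast
      rw [hnormX, hsum]
      rw [mul_add] at hih
      linarith
  intro n hn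
  have hnp : (0:ℝ) < (n:ℝ) := by exact_mod_cast Nat.pos_of_ne_zero (by omega)
  have hk := key n hn
  have : ‖Qs - Q n‖ ≤ (2 * γ₁ * (1 / (1 - γ₁)) * Vmax +
      ∑ k ∈ Finset.Icc 1 n, γ₁ ^ (n - k) * ‖M (k - 1)‖) / n := by
    rw [le_div_iff₀ hnp]
    linarith
  calc ‖Qs - Q n‖ ≤ (2 * γ₁ * (1 / (1 - γ₁)) * Vmax +
      ∑ k ∈ Finset.Icc 1 n, γ₁ ^ (n - k) * ‖M (k - 1)‖) / n := this
    _ = 2 * γ₁ * (1 / (1 - γ₁)) * Vmax / n +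
        (1 / (n : ℝ)) * ∑ k ∈ Finset.Icc 1 n, γ₁ ^ (n - k) * ‖M (k - 1)‖ := by
      field_simp
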